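/- Let q = 2^D and B ≤ D be positive integers. For any integer k with 0 ≤ k < 2^B and any integer e with -q/2^(B+1) ≤ e < q/2^(B+1), decoding the encoded value with added error recovers k: ⌊(ec(k)+e)·2^B/q⌉ mod 2^B = k, where ec(k) = k·q/2^B. -/

import Mathlib

/-- Frodo encode/decode correctness: with `q = 2^D`, `ec k = k * 2^(D-B)` and
`dc c = round (c * 2^B / q) mod 2^B`, any error `e` with
`-q/2^(B+1) ≤ e < q/2^(B+1)` is tolerated. -/
theorem frodo_decode_encode (D B : ℕ) (hB : 0 < B) (hBD : B ≤ D) (k e : ℤ)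
    (hk0 : 0 ≤ k) (hk : k < 2 ^ B)
    (he1 : -((2 : ℚ) ^ D / 2 ^ (B + 1)) ≤ (e : ℚ))
    (he2 : (e : ℚ) < (2 : ℚ) ^ D / 2 ^ (B + 1)) :
    round ((((k * 2 ^ (D - B) + e : ℤ) : ℚ) * 2 ^ B) / 2 ^ D) % 2 ^ B = k := by
  have h2 : ((2:ℚ)) ^ (D - B) * 2 ^ B = 2 ^ D := by
    rw [← pow_add]; congr 1; omega
  have hpos : (0:ℚ) < 2 ^ (D - B) := by positivity
  have harg : (((k * 2 ^ (D - B) + e : ℤ) : ℚ) * 2 ^ B) / 2 ^ D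
      = (k : ℚ) + (e : ℚ) / 2 ^ (D - B) := by
    push_cast
    field_simp
    ring_nf
    rw [← h2]; ring
  rw [harg]
  have hb : (2:ℚ) ^ D / 2 ^ (B + 1) = 2 ^ (D - B) / 2 := by
    rw [← h2, pow_succ]; field_simp
  have hx1 : -(1/2 : ℚ) ≤ (e : ℚ) / 2 ^ (D - B) := by
    rw [hb] at he1
    rw [neg_le, ← neg_div, div_le_div_iff₀ hpos (by norm_num)]
    linarith [neg_le.mp he1]
  have hx2 : (e : ℚ) / 2 ^ (D - B) < 1/2 := by
    rw [hb] at he2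
    rw [div_lt_div_iff₀ hpos (by norm_num)]
    linarith
  have hr : round ((k : ℚ) + (e : ℚ) / 2 ^ (D - B)) = k := by
    rw [add_comm, round_add_intCast, round_eq_zero_iff.mpr ⟨hx1, hx2⟩, zero_add]
  rw [hr, Int.emod_eq_of_lt hk0 hk]
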